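/- Let n be odd and let f₁, …, f_n be continuous 2π-periodic functions forming a Chebyshev system of order n on the circle. Let ρ : ℝ → ℝ be continuous, 2π-periodic with ρ ≥ 0, and let f : ℝ → ℝ be continuous and 2π-periodic with f·ρ not identically zero. If ∫_0^{2π} f(x)·f_j(x)·ρ(x) dx = 0 for every j = 1, …, n, then f changes sign at least n+1 times per period. -/

import Mathlib

open Set

/-- A chain of `k` sign alternations of `f` inside `[0, T)`. -/
def AltChain (f : ℝ → ℝ) (T : ℝ) (k : ℕ) : Prop :=
  ∃ t : ℕ → ℝ, (∀ i, i < k → t i < t (i + 1)) ∧ (∀ i, i ≤ k → t i ∈ Set.Ico 0 T) ∧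
    (∀ i, i < k → f (t i) * f (t (i + 1)) < 0)

lemma altChain_zero {f : ℝ → ℝ} {T : ℝ} (hT : 0 < T) : AltChain f T 0 :=
  ⟨fun _ => 0, fun i h => absurd h (Nat.not_lt_zero i),
    fun i _ => ⟨le_refl 0, hT⟩, fun i h => absurd h (Nat.not_lt_zero i)⟩

lemma altChain_mono {f : ℝ → ℝ} {T : ℝ} {k : ℕ} (h : AltChain f T (k + 1)) :
    AltChain f T k := by
  obtain ⟨t, h1, h2, h3⟩ := h
  exact ⟨t, fun i hi => h1 i (by omega), fun i hi => h2 i (by omega),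
    fun i hi => h3 i (by omega)⟩

/-- Along an alternating chain, the sign of `f (t j)` is `(-1)^j` times that of `f (t 0)`. -/
lemma altChain_sign {f : ℝ → ℝ} {k : ℕ} {t : ℕ → ℝ} (hk : 1 ≤ k)
    (h3 : ∀ i, i < k → f (t i) * f (t (i + 1)) < 0) :
    ∀ j, j ≤ k → 0 < f (t 0) * f (t j) * (-1 : ℝ) ^ j := by
  intro j
  induction j with
  | zero =>
    intro _
    have h0 := h3 0 (by omega)
    have hne : f (t 0) ≠ 0 := fun h => by simp [h] at h0
    simpa using mul_self_pos.mpr hne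
  | succ j ih =>
    intro hj
    have h1 := ih (by omega)
    have h2 := h3 j (by omega)
    have hne : f (t j) ≠ 0 := fun h => by simp [h] at h2
    have hsq : 0 < f (t j) * f (t j) := mul_self_pos.mpr hne
    rw [pow_succ]
    nlinarith [mul_pos h1 (neg_pos.mpr h2), hsq]

lemma altChain_prepend {f : ℝ → ℝ} {T : ℝ} {m : ℕ} {t : ℕ → ℝ}
    (h1 : ∀ i, i < m → t i < t (i + 1)) (h2 : ∀ i, i ≤ m → t i ∈ Set.Ico 0 T)
    (h3 : ∀ i, i < m → f (t i) * f (t (i + 1)) < 0)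
    {x : ℝ} (hx : x ∈ Set.Ico 0 T) (hlt : x < t 0) (hsgn : f x * f (t 0) < 0) :
    AltChain f T (m + 1) := by
  refine ⟨fun j => if j = 0 then x else t (j - 1), ?_, ?_, ?_⟩
  · intro i hi
    rcases Nat.eq_zero_or_pos i with rfl | hpos
    · simpa using hlt
    · have e1 : i ≠ 0 := by omega
      have e2 : i + 1 ≠ 0 := by omega
      simp only [e1, e2, if_false]
      have : i - 1 + 1 = i + 1 - 1 := by omega
      rw [← this]
      exact h1 (i - 1) (by omega)
  · intro i hi
    rcases Nat.eq_zero_or_pos i with rfl | hpos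
    · simpa using hx
    · have e1 : i ≠ 0 := by omega
      simp only [e1, if_false]
      exact h2 (i - 1) (by omega)
  · intro i hi
    rcases Nat.eq_zero_or_pos i with rfl | hpos
    · simpa using hsgn
    · have e1 : i ≠ 0 := by omega
      have e2 : i + 1 ≠ 0 := by omega
      simp only [e1, e2, if_false]
      have : i - 1 + 1 = i + 1 - 1 := by omega
      rw [← this]
      exact h3 (i - 1) (by omega)

lemma altChain_append {f : ℝ → ℝ} {T : ℝ} {m : ℕ} {t : ℕ → ℝ}
    (h1 : ∀ i, i < m → t i < t (i + 1)) (h2 : ∀ i, i ≤ m → t i ∈ Set.Ico 0 T)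
    (h3 : ∀ i, i < m → f (t i) * f (t (i + 1)) < 0)
    {x : ℝ} (hx : x ∈ Set.Ico 0 T) (hlt : t m < x) (hsgn : f (t m) * f x < 0) :
    AltChain f T (m + 1) := by
  refine ⟨fun j => if j ≤ m then t j else x, ?_, ?_, ?_⟩
  · intro i hi
    by_cases h : i + 1 ≤ m
    · simp only [show i ≤ m by omega, h, if_true]
      exact h1 i (by omega)
    · have him : i = m := by omega
      simp only [him, le_refl, if_true, show ¬ (m + 1 ≤ m) by omega, if_false]
      exact hlt
  · intro i hi
    by_cases h : i ≤ m
    · simp only [h, if_true]; exact h2 i h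
    · simp only [h, if_false]; exact hx
  · intro i hi
    by_cases h : i + 1 ≤ m
    · simp only [show i ≤ m by omega, h, if_true]
      exact h3 i (by omega)
    · have him : i = m := by omega
      simp only [him, le_refl, if_true, show ¬ (m + 1 ≤ m) by omega, if_false]
      exact hsgn

lemma altChain_insert2 {f : ℝ → ℝ} {T : ℝ} {m : ℕ} {t : ℕ → ℝ}
    (h1 : ∀ i, i < m → t i < t (i + 1)) (h2 : ∀ i, i ≤ m → t i ∈ Set.Ico 0 T)
    (h3 : ∀ i, i < m → f (t i) * f (t (i + 1)) < 0)
    {k : ℕ} (hk : k < m) {u v : ℝ} (hu : u ∈ Set.Ico 0 T) (hv : v ∈ Set.Ico 0 T)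
    (htu : t k < u) (huv : u < v) (hvt : v < t (k + 1))
    (s1 : f (t k) * f u < 0) (s2 : f u * f v < 0) (s3 : f v * f (t (k + 1)) < 0) :
    AltChain f T (m + 2) := by
  refine ⟨fun j => if j ≤ k then t j else if j = k + 1 then u else if j = k + 2 then v
    else t (j - 2), ?_, ?_, ?_⟩
  · intro i hi
    rcases lt_trichotomy i k with h | rfl | h
    · simp only [show i ≤ k by omega, show i + 1 ≤ k by omega, if_true]
      exact h1 i (by omega)
    · simp only [le_refl, if_true, show ¬ (i + 1 ≤ i) by omega, if_false, if_pos rfl]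
      exact htu
    · rcases Nat.lt_or_ge i (k + 2) with h' | h'
      · have hik : i = k + 1 := by omega
        simp only [hik, show ¬ (k + 1 ≤ k) by omega, show ¬ (k + 2 ≤ k) by omega,
          show ¬ (k + 2 = k + 1) by omega, if_false, if_pos rfl, if_true]
        exact huv
      · rcases Nat.eq_or_lt_of_le h' with rfl | h''
        · simp only [show ¬ (k + 2 ≤ k) by omega, show ¬ (k + 2 = k + 1) by omega,
            show ¬ (k + 2 + 1 ≤ k) by omega, show ¬ (k + 2 + 1 = k + 1) by omega,
            show ¬ (k + 2 + 1 = k + 2) by omega, if_false, if_pos rfl]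
          have e : k + 2 + 1 - 2 = k + 1 := by omega
          rw [e]
          exact hvt
        · simp only [show ¬ (i ≤ k) by omega, show ¬ (i = k + 1) by omega,
            show ¬ (i = k + 2) by omega, show ¬ (i + 1 ≤ k) by omega,
            show ¬ (i + 1 = k + 1) by omega, show ¬ (i + 1 = k + 2) by omega, if_false]
          have e : i + 1 - 2 = i - 2 + 1 := by omega
          rw [e]
          exact h1 (i - 2) (by omega)
  · intro i hi
    by_cases h : i ≤ k
    · simp only [h, if_true]; exact h2 i (by omega)
    · by_cases h' : i = k + 1
      · subst h'
        simp only [show ¬ (k + 1 ≤ k) by omega, if_false, if_pos rfl, if_true]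
        exact hu
      · by_cases h'' : i = k + 2
        · subst h''
          simp only [show ¬ (k + 2 ≤ k) by omega, show ¬ (k + 2 = k + 1) by omega,
            if_false, if_pos rfl, if_true]
          exact hv
        · simp only [h, h', h'', if_false]; exact h2 (i - 2) (by omega)
  · intro i hi
    rcases lt_trichotomy i k with h | rfl | h
    · simp only [show i ≤ k by omega, show i + 1 ≤ k by omega, if_true]
      exact h3 i (by omega)
    · simp only [le_refl, if_true, show ¬ (i + 1 ≤ i) by omega, if_false, if_pos rfl]
      exact s1
    · rcases Nat.lt_or_ge i (k + 2) with h' | h'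
      · have hik : i = k + 1 := by omega
        simp only [hik, show ¬ (k + 1 ≤ k) by omega, show ¬ (k + 2 ≤ k) by omega,
          show ¬ (k + 2 = k + 1) by omega, if_false, if_pos rfl, if_true]
        exact s2
      · rcases Nat.eq_or_lt_of_le h' with rfl | h''
        · simp only [show ¬ (k + 2 ≤ k) by omega, show ¬ (k + 2 = k + 1) by omega,
            show ¬ (k + 2 + 1 ≤ k) by omega, show ¬ (k + 2 + 1 = k + 1) by omega,
            show ¬ (k + 2 + 1 = k + 2) by omega, if_false, if_pos rfl]
          have e : k + 2 + 1 - 2 = k + 1 := by omega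
          rw [e]
          exact s3
        · simp only [show ¬ (i ≤ k) by omega, show ¬ (i = k + 1) by omega,
            show ¬ (i = k + 2) by omega, show ¬ (i + 1 ≤ k) by omega,
            show ¬ (i + 1 = k + 1) by omega, show ¬ (i + 1 = k + 2) by omega, if_false]
          have e : i + 1 - 2 = i - 2 + 1 := by omega
          rw [e]
          exact h3 (i - 2) (by omega)


noncomputable def zcnt (z : ℕ → ℝ) (m : ℕ) (x : ℝ) : ℕ :=
  ((Finset.range m).filter (fun i => z i ≤ x)).card

lemma zcnt_le (z : ℕ → ℝ) (m : ℕ) (x : ℝ) : zcnt z m x ≤ m := by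
  calc ((Finset.range m).filter (fun i => z i ≤ x)).card
      ≤ (Finset.range m).card := Finset.card_filter_le _ _
    _ = m := Finset.card_range m

lemma zcnt_lt (z : ℕ → ℝ) (m : ℕ) (x : ℝ)
    (hz : ∀ i j, i < j → j < m → z i < z j) :
    ∀ i, i < m → zcnt z m x ≤ i → x < z i := by
  intro i him hcnt
  by_contra hle
  push_neg at hle
  have hsub : Finset.range (i + 1) ⊆ (Finset.range m).filter (fun i => z i ≤ x) := by
    intro j hj
    rw [Finset.mem_range] at hj
    rw [Finset.mem_filter, Finset.mem_range]
    refine ⟨by omega, ?_⟩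
    rcases Nat.lt_or_ge j i with h | h
    · exact le_trans (hz j i h him).le hle
    · have : j = i := by omega
      rw [this]; exact hle
  have := Finset.card_le_card hsub
  rw [Finset.card_range] at this
  have : i + 1 ≤ zcnt z m x := this
  omega

lemma zcnt_ge (z : ℕ → ℝ) (m : ℕ) (x : ℝ)
    (hz : ∀ i j, i < j → j < m → z i < z j) :
    ∀ i, i < m → i < zcnt z m x → z i ≤ x := by
  intro i him hcnt
  by_contra hle
  push_neg at hle
  have hsub : (Finset.range m).filter (fun i => z i ≤ x) ⊆ Finset.range i := by
    intro j hj
    rw [Finset.mem_filter, Finset.mem_range] at hj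
    rw [Finset.mem_range]
    by_contra hij
    push_neg at hij
    rcases Nat.eq_or_lt_of_le hij with rfl | h
    · exact absurd hj.2 (not_le.mpr hle)
    · exact absurd (le_trans (hz i j h hj.1).le hj.2) (not_le.mpr hle)
  have := Finset.card_le_card hsub
  rw [Finset.card_range] at this
  have : zcnt z m x ≤ i := this
  omega

lemma pattern {f : ℝ → ℝ} (hf : Continuous f) {T : ℝ} (hT : 0 < T) {m : ℕ}
    (hm : AltChain f T m) (hmax : ¬ AltChain f T (m + 1)) :
    ∃ (z : ℕ → ℝ) (ε : ℝ), ε ≠ 0 ∧ (∀ i j, i < j → j < m → z i < z j) ∧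
      (∀ i, i < m → z i ∈ Set.Ioo 0 T) ∧ (∀ i, i < m → f (z i) = 0) ∧
      ∀ x ∈ Set.Ico 0 T, 0 ≤ f x * ε * (-1) ^ (zcnt z m x) := by
  rcases Nat.eq_zero_or_pos m with rfl | hm1
  · -- no sign changes at all
    have hz0 : ∀ x : ℝ, zcnt (fun _ => (0:ℝ)) 0 x = 0 := by
      intro x; simp [zcnt]
    by_cases hneg : ∀ x ∈ Set.Ico 0 T, f x ≤ 0
    · refine ⟨fun _ => 0, -1, by norm_num, by omega, by omega, by omega, ?_⟩
      intro x hx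
      rw [hz0]
      simpa using hneg x hx
    · push_neg at hneg
      obtain ⟨a, ha, hfa⟩ := hneg
      refine ⟨fun _ => 0, 1, by norm_num, by omega, by omega, by omega, ?_⟩
      intro x hx
      rw [hz0]
      simp only [pow_zero, mul_one]
      by_contra hlt
      push_neg at hlt
      apply hmax
      rcases lt_trichotomy a x with h | rfl | h
      · refine ⟨fun j => if j = 0 then a else x, ?_, ?_, ?_⟩
        · intro i hi
          have h0 : i = 0 := by omega
          subst h0
          simpa using h
        · intro i hi
          by_cases h0 : i = 0
          · subst h0; simpa using ha
          · simp only [h0, if_false]; exact hx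
        · intro i hi
          have h0 : i = 0 := by omega
          subst h0
          simp only [if_pos rfl, one_ne_zero, if_false]
          exact mul_neg_of_pos_of_neg hfa hlt
      · exact absurd hfa (by linarith)
      · refine ⟨fun j => if j = 0 then x else a, ?_, ?_, ?_⟩
        · intro i hi
          have h0 : i = 0 := by omega
          subst h0
          simpa using h
        · intro i hi
          by_cases h0 : i = 0
          · subst h0; simpa using hx
          · simp only [h0, if_false]; exact ha
        · intro i hi
          have h0 : i = 0 := by omega
          subst h0
          simp only [if_pos rfl, one_ne_zero, if_false]
          exact mul_neg_of_neg_of_pos hlt hfa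
  · -- m ≥ 1
    obtain ⟨t, h1, h2, h3⟩ := hm
    have hne : ∀ i, i ≤ m → f (t i) ≠ 0 := by
      intro i hi
      rcases Nat.lt_or_ge i m with h | h
      · intro h0; have := h3 i h; rw [h0] at this; simp at this
      · have him : i = m := by omega
        have hh := h3 (m - 1) (by omega)
        have e : m - 1 + 1 = m := by omega
        rw [e] at hh
        intro h0
        rw [him] at h0
        rw [h0] at hh
        simp at hh
    have tlt : ∀ j, j ≤ m → ∀ i, i < j → t i < t j := by
      intro j
      induction j with
      | zero => omega
      | succ j ih =>
        intro hj i hi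
        rcases Nat.lt_or_ge i j with h | h
        · exact lt_trans (ih (by omega) i h) (h1 j (by omega))
        · have : i = j := by omega
          subst this; exact h1 i (by omega)
    have halt := altChain_sign hm1 h3
    -- the separators
    set S : ℕ → Set ℝ := fun i => {x | x ∈ Set.Icc (t i) (t (i + 1)) ∧ 0 < f x * f (t i)}
      with hS
    set z : ℕ → ℝ := fun i => sSup (S i) with hzdef
    have hSmem : ∀ i, i < m → t i ∈ S i :=
      fun i hi => ⟨⟨le_refl _, (h1 i hi).le⟩, mul_self_pos.mpr (hne i (by omega))⟩
    have hSbdd : ∀ i, BddAbove (S i) := fun i => ⟨t (i + 1), fun x hx => hx.1.2⟩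
    have hz_ge : ∀ i, i < m → t i ≤ z i := fun i hi => le_csSup (hSbdd i) (hSmem i hi)
    have hz_le : ∀ i, i < m → z i ≤ t (i + 1) :=
      fun i hi => csSup_le ⟨_, hSmem i hi⟩ (fun x hx => hx.1.2)
    have hz_upper : ∀ i, i < m → ∀ x, z i < x → x ≤ t (i + 1) → f x * f (t i) ≤ 0 := by
      intro i hi x hzx hxt
      by_contra hpos
      push_neg at hpos
      have hxS : x ∈ S i := ⟨⟨le_trans (hz_ge i hi) hzx.le, hxt⟩, hpos⟩
      exact absurd (le_csSup (hSbdd i) hxS) (not_le.mpr hzx)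
    have hz_llim : ∀ i, i < m → 0 ≤ f (z i) * f (t i) := by
      intro i hi
      by_contra hneg
      push_neg at hneg
      have hU : IsOpen {y : ℝ | f y * f (t i) < 0} :=
        isOpen_lt (hf.mul continuous_const) continuous_const
      obtain ⟨δ, hδ, hball⟩ := Metric.isOpen_iff.mp hU (z i) hneg
      obtain ⟨s, hsS, hs⟩ := exists_lt_of_lt_csSup ⟨_, hSmem i hi⟩
        (show z i - δ < z i by linarith)
      have hsz : s ≤ z i := le_csSup (hSbdd i) hsS
      have : s ∈ Metric.ball (z i) δ := by
        rw [Metric.mem_ball, Real.dist_eq, abs_lt]; constructor <;> linarith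
      exact absurd hsS.2 (not_lt.mpr (hball this).le)
    have hz0 : ∀ i, i < m → f (z i) = 0 := by
      intro i hi
      rcases lt_trichotomy (f (z i) * f (t i)) 0 with h | h | h
      · exact absurd h (not_lt.mpr (hz_llim i hi))
      · rcases mul_eq_zero.mp h with h' | h'
        · exact h'
        · exact absurd h' (hne i (by omega))
      · exfalso
        have hzi1 : z i < t (i + 1) := by
          rcases lt_or_eq_of_le (hz_le i hi) with h' | h'
          · exact h'
          · exfalso
            rw [h'] at h
            have := h3 i hi
            nlinarith
        have hV : IsOpen {y : ℝ | 0 < f y * f (t i)} :=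
          isOpen_lt continuous_const (hf.mul continuous_const)
        obtain ⟨δ, hδ, hball⟩ := Metric.isOpen_iff.mp hV (z i) h
        set y := min (z i + δ / 2) ((z i + t (i + 1)) / 2) with hy
        have hy1 : z i < y := by
          apply lt_min <;> linarith
        have hy2 : y ≤ t (i + 1) := by
          apply le_trans (min_le_right _ _); linarith
        have hyball : y ∈ Metric.ball (z i) δ := by
          rw [Metric.mem_ball, Real.dist_eq, abs_lt]
          constructor
          · linarith [min_le_right (z i + δ / 2) ((z i + t (i + 1)) / 2)]
          · have := min_le_left (z i + δ / 2) ((z i + t (i + 1)) / 2); linarith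
        exact absurd (hball hyball) (not_lt.mpr (hz_upper i hi y hy1 hy2))
    have hz_lower : ∀ i, i < m → ∀ x, t i ≤ x → x ≤ z i → 0 ≤ f x * f (t i) := by
      intro i hi x htx hxz
      by_contra hneg
      push_neg at hneg
      have hxti : t i < x := by
        rcases lt_or_eq_of_le htx with h | h
        · exact h
        · exfalso; rw [← h] at hneg; nlinarith [mul_self_pos.mpr (hne i (by omega))]
      have hxzi : x < z i := by
        rcases lt_or_eq_of_le hxz with h | h
        · exact h
        · exfalso; rw [h, hz0 i hi] at hneg; simp at hneg
      obtain ⟨s, hsS, hxs⟩ := exists_lt_of_lt_csSup ⟨_, hSmem i hi⟩ hxzi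
      have hst : s < t (i + 1) := by
        rcases lt_or_eq_of_le hsS.1.2 with h | h
        · exact h
        · exfalso; have := h3 i hi; rw [h] at hsS; nlinarith [hsS.2]
      have hxT : x ∈ Set.Ico 0 T := by
        constructor
        · linarith [(h2 i (by omega)).1]
        · have := (h2 (i + 1) (by omega)).2
          linarith [hz_le i hi]
      have hsT : s ∈ Set.Ico 0 T := by
        constructor
        · linarith [(h2 i (by omega)).1, hsS.1.1]
        · have := (h2 (i + 1) (by omega)).2; linarith
      have hsq := mul_self_pos.mpr (hne i (by omega))
      have hp1 : 0 < (f s * f (t i)) * (-(f x * f (t i))) :=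
        mul_pos hsS.2 (neg_pos.mpr hneg)
      have hp2 : 0 < (f s * f (t i)) * (-(f (t i) * f (t (i + 1)))) :=
        mul_pos hsS.2 (neg_pos.mpr (h3 i hi))
      have hins := altChain_insert2 h1 h2 h3 hi hxT hsT hxti hxs hst
        (by nlinarith) (by nlinarith [hp1, hsq]) (by nlinarith [hp2, hsq])
      exact hmax (altChain_mono hins)
    have hd : ∀ x, x ∈ Set.Ico 0 T → x ≤ t 0 → 0 ≤ f x * f (t 0) := by
      intro x hx hxt
      by_contra hneg
      push_neg at hneg
      have hlt : x < t 0 := by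
        rcases lt_or_eq_of_le hxt with h | h
        · exact h
        · exfalso; rw [h] at hneg; nlinarith [mul_self_pos.mpr (hne 0 (by omega))]
      exact hmax (altChain_prepend h1 h2 h3 hx hlt hneg)
    have he : ∀ x, x ∈ Set.Ico 0 T → t m ≤ x → 0 ≤ f x * f (t m) := by
      intro x hx hxt
      by_contra hneg
      push_neg at hneg
      have hlt : t m < x := by
        rcases lt_or_eq_of_le hxt with h | h
        · exact h
        · exfalso; rw [← h] at hneg; nlinarith [mul_self_pos.mpr (hne m le_rfl)]
      exact hmax (altChain_append h1 h2 h3 hx hlt (by nlinarith))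
    have hzlt : ∀ i, i < m → z i < t (i + 1) := by
      intro i hi
      rcases lt_or_eq_of_le (hz_le i hi) with h | h
      · exact h
      · exfalso
        have := hne (i + 1) (by omega)
        rw [← h, hz0 i hi] at this
        exact this rfl
    have hzgt : ∀ i, i < m → t i < z i := by
      intro i hi
      rcases lt_or_eq_of_le (hz_ge i hi) with h | h
      · exact h
      · exfalso
        have := hne i (by omega)
        rw [h, hz0 i hi] at this
        exact this rfl
    have zmono : ∀ i j, i < j → j < m → z i < z j := by
      intro i j hij hjm
      calc z i < t (i + 1) := hzlt i (by omega)
        _ ≤ t j := by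
          rcases Nat.lt_or_ge (i + 1) j with h | h
          · exact (tlt j (by omega) (i + 1) h).le
          · have : i + 1 = j := by omega
            rw [this]
        _ < z j := hzgt j hjm
    have zIoo : ∀ i, i < m → z i ∈ Set.Ioo 0 T := by
      intro i hi
      constructor
      · linarith [(h2 i (by omega)).1, hzgt i hi]
      · linarith [(h2 (i + 1) (by omega)).2, hzlt i hi]
    refine ⟨z, f (t 0), hne 0 (by omega), zmono, zIoo, hz0, ?_⟩
    intro x hx
    obtain ⟨j, hj⟩ : ∃ j, zcnt z m x = j := ⟨_, rfl⟩
    rw [hj]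
    have hjm : j ≤ m := hj ▸ zcnt_le z m x
    rcases Nat.eq_zero_or_pos j with hj0 | hj1
    · -- x below z 0
      rw [hj0, pow_zero, mul_one]
      rcases le_total x (t 0) with h | h
      · exact hd x hx h
      · have hxz : x < z 0 := zcnt_lt z m x zmono 0 hm1 (by omega)
        exact hz_lower 0 hm1 x h hxz.le
    · have hzj1 : z (j - 1) ≤ x := zcnt_ge z m x zmono (j - 1) (by omega) (by omega)
      have hpow : (-1 : ℝ) ^ j = (-1) ^ (j - 1) * (-1) := by
        have : j = (j - 1) + 1 := by omega
        rw [this, pow_succ]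
        congr 1 <;> congr 1 <;> omega
      rcases le_total x (t j) with h | h
      · -- between z (j-1) and t j
        have hA : f x * f (t (j - 1)) ≤ 0 := by
          rcases lt_or_eq_of_le hzj1 with h' | h'
          · apply hz_upper (j - 1) (by omega) x h'
            have e : j - 1 + 1 = j := by omega
            rw [e]; exact h
          · rw [← h', hz0 (j - 1) (by omega)]; simp
        have hB := halt (j - 1) (by omega)
        have hsq := mul_self_pos.mpr (hne (j - 1) (by omega))
        rw [hpow]
        nlinarith [mul_nonneg (neg_nonneg.mpr hA) hB.le]
      · -- above t j
        rcases Nat.lt_or_ge j m with hjm' | hjm'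
        · have hxzj : x < z j := zcnt_lt z m x zmono j hjm' (by omega)
          have hC := hz_lower j hjm' x h hxzj.le
          have hB := halt j hjm
          have hsq := mul_self_pos.mpr (hne j (by omega))
          nlinarith [mul_nonneg hC hB.le]
        · have hjm'' : j = m := by omega
          subst hjm''
          have hC := he x hx h
          have hB := halt j le_rfl
          have hsq := mul_self_pos.mpr (hne j le_rfl)
          nlinarith [mul_nonneg hC hB.le]


noncomputable def psiMat (p : ℕ) (F : Fin (p + 1) → ℝ → ℝ) (V : Fin (p + 1) → ℝ) :
    Matrix (Fin (p + 1)) (Fin (p + 1)) ℝ := Matrix.of fun i j => F j (V i)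

noncomputable def psi (p : ℕ) (F : Fin (p + 1) → ℝ → ℝ) (N : Fin p → ℝ) (x : ℝ) : ℝ :=
  (psiMat p F (Fin.cases x N)).det

noncomputable def coef (p : ℕ) (F : Fin (p + 1) → ℝ → ℝ) (N : Fin p → ℝ) (j : Fin (p + 1)) : ℝ :=
  (-1 : ℝ) ^ (j : ℕ) * (Matrix.of fun (i : Fin p) (j' : Fin p) => F (j.succAbove j') (N i)).det

lemma psi_eq_sum (p : ℕ) (F : Fin (p + 1) → ℝ → ℝ) (N : Fin p → ℝ) (x : ℝ) :
    psi p F N x = ∑ j, coef p F N j * F j x := by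
  rw [psi, Matrix.det_succ_row_zero]
  refine Finset.sum_congr rfl fun j _ => ?_
  have hsub : (psiMat p F (Fin.cases x N)).submatrix Fin.succ j.succAbove =
      Matrix.of fun (i : Fin p) (j' : Fin p) => F (j.succAbove j') (N i) := by
    ext i j'
    simp [psiMat, Matrix.submatrix]
  rw [hsub, coef]
  have : (psiMat p F (Fin.cases x N)) 0 j = F j x := by simp [psiMat]
  rw [this]
  ring

lemma vand_ne_zero {p : ℕ} {F : Fin (p + 1) → ℝ → ℝ} {T : ℝ}
    (hcheb : ∀ c : Fin (p + 1) → ℝ, c ≠ 0 →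
      {x ∈ Set.Ico 0 T | ∑ j, c j * F j x = 0}.encard ≤ (p : ℕ∞))
    (V : Fin (p + 1) → ℝ) (hinj : Function.Injective V) (hmem : ∀ i, V i ∈ Set.Ico 0 T) :
    (psiMat p F V).det ≠ 0 := by
  intro h0
  obtain ⟨c, hc0, hc⟩ := Matrix.exists_mulVec_eq_zero_iff.mpr h0
  have hzero : ∀ i, ∑ j, c j * F j (V i) = 0 := by
    intro i
    have := congrFun hc i
    simpa [Matrix.mulVec, dotProduct, psiMat, mul_comm] using this
  have hsub : Set.range V ⊆ {x ∈ Set.Ico 0 T | ∑ j, c j * F j x = 0} := by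
    rintro _ ⟨i, rfl⟩; exact ⟨hmem i, hzero i⟩
  have h1 : (Set.range V).encard = ((p + 1 : ℕ) : ℕ∞) := by
    rw [← Set.image_univ, Set.InjOn.encard_image (hinj.injOn), Set.encard_univ]
    simp
  have h2 := Set.encard_le_encard hsub
  have h3 := le_trans h2 (hcheb c hc0)
  rw [h1] at h3
  have := (Nat.cast_le (α := ℕ∞)).mp h3
  omega

lemma psi_continuous (p : ℕ) (F : Fin (p + 1) → ℝ → ℝ) (hFc : ∀ j, Continuous (F j))
    (N : Fin p → ℝ) : Continuous (psi p F N) := by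
  refine Continuous.matrix_det (continuous_matrix fun i j => ?_)
  induction i using Fin.cases with
  | zero => simpa [psiMat] using (hFc j)
  | succ i => simpa [psiMat] using continuous_const

lemma same_sign_of_no_zero {g : ℝ → ℝ} {a b : ℝ} (hg : ContinuousOn g (Set.Icc a b))
    (hab : a ≤ b) (h0 : ∀ c ∈ Set.Icc a b, g c ≠ 0) : 0 < g a * g b := by
  rcases (h0 a ⟨le_refl a, hab⟩).lt_or_gt with ha | ha
  · rcases (h0 b ⟨hab, le_refl b⟩).lt_or_gt with hb | hb
    · exact mul_pos_of_neg_of_neg ha hb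
    · exfalso
      obtain ⟨c, hc, hc0⟩ := intermediate_value_Icc hab hg ⟨ha.le, hb.le⟩
      exact h0 c hc hc0
  · rcases (h0 b ⟨hab, le_refl b⟩).lt_or_gt with hb | hb
    · exfalso
      obtain ⟨c, hc, hc0⟩ := intermediate_value_Icc' hab hg ⟨hb.le, ha.le⟩
      exact h0 c hc hc0
    · exact mul_pos ha hb

lemma psi_update_swap (p : ℕ) (F : Fin (p + 1) → ℝ → ℝ) (N : Fin p → ℝ) (i₀ : Fin p)
    (u v : ℝ) :
    psi p F (Function.update N i₀ v) u = - psi p F (Function.update N i₀ u) v := by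
  have hvec : ∀ i : Fin (p + 1), (Fin.cases u (Function.update N i₀ v) : Fin (p+1) → ℝ) i =
      Fin.cases v (Function.update N i₀ u) (Equiv.swap 0 i₀.succ i) := by
    intro i
    induction i using Fin.cases with
    | zero =>
      rw [Equiv.swap_apply_left]
      simp
    | succ k =>
      by_cases hk : k = i₀
      · subst hk
        rw [Equiv.swap_apply_right]
        simp
      · rw [Equiv.swap_apply_of_ne_of_ne (Fin.succ_ne_zero k)
          (fun h => hk (Fin.succ_injective _ h))]
        simp [Function.update_of_ne hk]
  have hmat : psiMat p F (Fin.cases u (Function.update N i₀ v)) =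
      (psiMat p F (Fin.cases v (Function.update N i₀ u))).submatrix
        (Equiv.swap 0 i₀.succ) id := by
    ext i j
    simp only [psiMat, Matrix.of_apply, Matrix.submatrix_apply, id]
    exact congrArg (F j) (hvec i)
  rw [psi, psi, hmat, Matrix.det_permute, Equiv.Perm.sign_swap (Fin.succ_ne_zero i₀).symm]
  simp

lemma cases_inj {p : ℕ} {x : ℝ} {N : Fin p → ℝ} (hN : Function.Injective N)
    (hx : ∀ k, N k ≠ x) : Function.Injective (Fin.cases x N : Fin (p + 1) → ℝ) := by
  intro a b hab
  induction a using Fin.cases with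
  | zero =>
    induction b using Fin.cases with
    | zero => rfl
    | succ b =>
      simp only [Fin.cases_zero, Fin.cases_succ] at hab
      exact absurd hab.symm (hx b)
  | succ a =>
    induction b using Fin.cases with
    | zero =>
      simp only [Fin.cases_zero, Fin.cases_succ] at hab
      exact absurd hab (hx a)
    | succ b =>
      simp only [Fin.cases_succ] at hab
      rw [hN hab]

lemma psi_ne_zero {p : ℕ} {F : Fin (p + 1) → ℝ → ℝ} {T : ℝ}
    (hcheb : ∀ c : Fin (p + 1) → ℝ, c ≠ 0 →
      {x ∈ Set.Ico 0 T | ∑ j, c j * F j x = 0}.encard ≤ (p : ℕ∞))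
    {N : Fin p → ℝ} (hNinj : Function.Injective N) (hNmem : ∀ i, N i ∈ Set.Ico 0 T)
    {x : ℝ} (hx : x ∈ Set.Ico 0 T) (hxN : ∀ k, N k ≠ x) : psi p F N x ≠ 0 := by
  apply vand_ne_zero hcheb _ (cases_inj hNinj hxN)
  intro i
  induction i using Fin.cases with
  | zero => simpa using hx
  | succ i => simpa using hNmem i

lemma psi_update_continuous (p : ℕ) (F : Fin (p + 1) → ℝ → ℝ)
    (hFc : ∀ j, Continuous (F j)) (N : Fin p → ℝ) (i₀ : Fin p) (x : ℝ) :
    Continuous (fun v => psi p F (Function.update N i₀ v) x) := by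
  refine Continuous.matrix_det (continuous_matrix fun i j => ?_)
  induction i using Fin.cases with
  | zero => simpa [psiMat] using continuous_const
  | succ k =>
    by_cases hk : k = i₀
    · subst hk
      simpa [psiMat] using (hFc j)
    · simpa [psiMat, Function.update_of_ne hk] using continuous_const

lemma psi_flip {p : ℕ} {F : Fin (p + 1) → ℝ → ℝ} {T : ℝ}
    (hcheb : ∀ c : Fin (p + 1) → ℝ, c ≠ 0 →
      {x ∈ Set.Ico 0 T | ∑ j, c j * F j x = 0}.encard ≤ (p : ℕ∞))
    (hFc : ∀ j, Continuous (F j))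
    {N : Fin p → ℝ} (hNinj : Function.Injective N) (hNmem : ∀ i, N i ∈ Set.Ico 0 T)
    {x y : ℝ} (hx : x ∈ Set.Ico 0 T) (hy : y ∈ Set.Ico 0 T) (hxy : x < y)
    (hxN : ∀ k, N k ≠ x) (hyN : ∀ k, N k ≠ y)
    (i₀ : Fin p) (hi₀ : N i₀ ∈ Set.Ioo x y) (hothers : ∀ k, k ≠ i₀ → N k ∉ Set.Ioo x y) :
    psi p F N x * psi p F N y < 0 := by
  set χ : ℝ → ℝ := fun v => psi p F (Function.update N i₀ v) x with hχ
  set χ' : ℝ → ℝ := fun u => psi p F (Function.update N i₀ u) y with hχ'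
  have hχ1 : ∀ v ∈ Set.Icc (N i₀) y, χ v ≠ 0 := by
    intro v hv
    apply vand_ne_zero hcheb
    · apply cases_inj
      · intro a b hab
        by_cases ha : a = i₀ <;> by_cases hb : b = i₀
        · rw [ha, hb]
        · subst ha
          rw [Function.update_self, Function.update_of_ne hb] at hab
          exfalso
          rcases lt_or_eq_of_le hv.2 with h | h
          · exact hothers b hb (hab ▸ ⟨lt_of_lt_of_le hi₀.1 hv.1, h⟩)
          · exact hyN b (hab ▸ h)
        · subst hb
          rw [Function.update_self, Function.update_of_ne ha] at hab
          exfalso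
          rcases lt_or_eq_of_le hv.2 with h | h
          · exact hothers a ha (hab ▸ ⟨lt_of_lt_of_le hi₀.1 hv.1, h⟩)
          · exact hyN a (hab ▸ h)
        · rw [Function.update_of_ne ha, Function.update_of_ne hb] at hab
          exact hNinj hab
      · intro k
        by_cases hk : k = i₀
        · rw [hk, Function.update_self]
          exact ne_of_gt (lt_of_lt_of_le hi₀.1 hv.1)
        · rw [Function.update_of_ne hk]; exact hxN k
    · intro i
      induction i using Fin.cases with
      | zero => simpa using hx
      | succ k =>
        rw [Fin.cases_succ]
        by_cases hk : k = i₀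
        · rw [hk, Function.update_self]
          exact ⟨le_trans (hNmem i₀).1 hv.1, lt_of_le_of_lt hv.2 hy.2⟩
        · rw [Function.update_of_ne hk]; exact hNmem k
  have hχ'1 : ∀ u ∈ Set.Icc x (N i₀), χ' u ≠ 0 := by
    intro u hu
    apply vand_ne_zero hcheb
    · apply cases_inj
      · intro a b hab
        by_cases ha : a = i₀ <;> by_cases hb : b = i₀
        · rw [ha, hb]
        · subst ha
          rw [Function.update_self, Function.update_of_ne hb] at hab
          exfalso
          rcases lt_or_eq_of_le hu.1 with h | h
          · exact hothers b hb (hab ▸ ⟨h, lt_of_le_of_lt hu.2 hi₀.2⟩)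
          · exact hxN b (hab ▸ h.symm)
        · subst hb
          rw [Function.update_self, Function.update_of_ne ha] at hab
          exfalso
          rcases lt_or_eq_of_le hu.1 with h | h
          · exact hothers a ha (hab ▸ ⟨h, lt_of_le_of_lt hu.2 hi₀.2⟩)
          · exact hxN a (hab ▸ h.symm)
        · rw [Function.update_of_ne ha, Function.update_of_ne hb] at hab
          exact hNinj hab
      · intro k
        by_cases hk : k = i₀
        · rw [hk, Function.update_self]
          exact ne_of_lt (lt_of_le_of_lt hu.2 hi₀.2)
        · rw [Function.update_of_ne hk]; exact hyN k
    · intro i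
      induction i using Fin.cases with
      | zero => simpa using hy
      | succ k =>
        rw [Fin.cases_succ]
        by_cases hk : k = i₀
        · rw [hk, Function.update_self]
          exact ⟨le_trans hx.1 hu.1, lt_of_lt_of_le (lt_of_le_of_lt hu.2 hi₀.2) hy.2.le⟩
        · rw [Function.update_of_ne hk]; exact hNmem k
  have h1 : 0 < χ (N i₀) * χ y :=
    same_sign_of_no_zero ((psi_update_continuous p F hFc N i₀ x).continuousOn)
      hi₀.2.le hχ1
  have h2 : 0 < χ' x * χ' (N i₀) :=
    same_sign_of_no_zero ((psi_update_continuous p F hFc N i₀ y).continuousOn)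
      hi₀.1.le hχ'1
  have he1 : χ (N i₀) = psi p F N x := by rw [hχ]; simp [Function.update_eq_self]
  have he2 : χ' (N i₀) = psi p F N y := by rw [hχ']; simp [Function.update_eq_self]
  have he3 : χ' x = - χ y := by
    rw [hχ, hχ']
    exact psi_update_swap p F N i₀ y x
  rw [he1] at h1
  rw [he2, he3] at h2
  nlinarith [mul_pos h1 h2, sq_nonneg (χ y)]

lemma psi_chain {p : ℕ} {F : Fin (p + 1) → ℝ → ℝ} {T : ℝ}
    (hcheb : ∀ c : Fin (p + 1) → ℝ, c ≠ 0 →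
      {x ∈ Set.Ico 0 T | ∑ j, c j * F j x = 0}.encard ≤ (p : ℕ∞))
    (hFc : ∀ j, Continuous (F j))
    {N : Fin p → ℝ} (hNmono : StrictMono N) (hNmem : ∀ i, N i ∈ Set.Ico 0 T) :
    ∀ C : ℕ, ∀ x y : ℝ, x ∈ Set.Ico 0 T → y ∈ Set.Ico 0 T → x ≤ y →
      (∀ k, N k ≠ x) → (∀ k, N k ≠ y) →
      (Finset.univ.filter (fun i => N i ∈ Set.Ioo x y)).card = C →
      0 < psi p F N x * psi p F N y * (-1 : ℝ) ^ C := by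
  intro C
  induction C using Nat.strong_induction_on with
  | _ C ih =>
  intro x y hx hy hxy hxN hyN hcard
  rcases Nat.eq_zero_or_pos C with rfl | hC1
  · -- no nodes between
    rw [Finset.card_eq_zero] at hcard
    have hnov : ∀ c ∈ Set.Icc x y, psi p F N c ≠ 0 := by
      intro c hc
      apply psi_ne_zero hcheb hNmono.injective hNmem
        ⟨le_trans hx.1 hc.1, lt_of_le_of_lt hc.2 hy.2⟩
      intro k hk
      rcases lt_or_eq_of_le hc.1 with h | h
      · rcases lt_or_eq_of_le hc.2 with h' | h'
        · have : k ∈ Finset.univ.filter (fun i => N i ∈ Set.Ioo x y) := by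
            simp only [Finset.mem_filter, Finset.mem_univ, true_and]
            exact hk ▸ ⟨h, h'⟩
          rw [hcard] at this
          simp at this
        · exact hyN k (hk.trans h')
      · exact hxN k (hk.trans h.symm)
    have := same_sign_of_no_zero ((psi_continuous p F hFc N).continuousOn) hxy hnov
    simpa using this
  · -- at least one node between
    have hne : (Finset.univ.filter (fun i => N i ∈ Set.Ioo x y)).Nonempty := by
      rw [← Finset.card_pos, hcard]; omega
    set i₀ := (Finset.univ.filter (fun i => N i ∈ Set.Ioo x y)).min' hne with hi₀def
    have hi₀mem : N i₀ ∈ Set.Ioo x y := by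
      have := Finset.min'_mem _ hne
      simp only [Finset.mem_filter] at this
      exact this.2
    have hi₀min : ∀ k, N k ∈ Set.Ioo x y → i₀ ≤ k := by
      intro k hk
      apply Finset.min'_le
      simp only [Finset.mem_filter, Finset.mem_univ, true_and]
      exact hk
    have hxlty : x < y := lt_trans hi₀mem.1 hi₀mem.2
    rcases Nat.eq_or_lt_of_le hC1 with hC | hC2
    · -- exactly one node
      obtain ⟨a, ha⟩ := Finset.card_eq_one.mp (hcard.trans hC.symm)
      have hi₀a : i₀ = a := by
        have hi₀f : i₀ ∈ Finset.univ.filter (fun i => N i ∈ Set.Ioo x y) :=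
          Finset.min'_mem _ hne
        rw [ha, Finset.mem_singleton] at hi₀f
        exact hi₀f
      have hothers : ∀ k, k ≠ i₀ → N k ∉ Set.Ioo x y := by
        intro k hk hmem
        have : k ∈ Finset.univ.filter (fun i => N i ∈ Set.Ioo x y) := by
          simp only [Finset.mem_filter, Finset.mem_univ, true_and]
          exact hmem
        rw [ha, Finset.mem_singleton] at this
        exact hk (this.trans hi₀a.symm)
      have hflip := psi_flip hcheb hFc hNmono.injective hNmem hx hy hxlty hxN hyN
        i₀ hi₀mem hothers
      rw [← hC, pow_one]
      nlinarith [hflip]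
    · -- at least two nodes: split at a midpoint after the first node
      have h2card : 1 < (Finset.univ.filter (fun i => N i ∈ Set.Ioo x y)).card := by omega
      obtain ⟨a, haf, b, hbf, hab⟩ := Finset.one_lt_card.mp h2card
      have hk2 : ∃ k, k ∈ Finset.univ.filter (fun i => N i ∈ Set.Ioo x y) ∧ k ≠ i₀ := by
        by_cases h : a = i₀
        · exact ⟨b, hbf, fun hb => hab (h.trans hb.symm)⟩
        · exact ⟨a, haf, h⟩
      obtain ⟨k, hkf, hki₀⟩ := hk2
      have hkIoo : N k ∈ Set.Ioo x y := by
        simp only [Finset.mem_filter, Finset.mem_univ, true_and] at hkf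
        exact hkf
      have hi₀k : i₀ < k := lt_of_le_of_ne (hi₀min k hkIoo) hki₀.symm
      have hi1lt : (i₀ : ℕ) + 1 < p := by
        have := hi₀k
        have hkp := k.isLt
        omega
      set i₁ : Fin p := ⟨(i₀ : ℕ) + 1, hi1lt⟩ with hi₁def
      have hi₀i₁ : i₀ < i₁ := by
        rw [Fin.lt_def]; simp [hi₁def]
      have hi₁k : i₁ ≤ k := by
        rw [Fin.le_def]
        simp only [hi₁def]
        exact hi₀k
      have hNi₁ : N i₁ ∈ Set.Ioo x y :=
        ⟨lt_trans hi₀mem.1 (hNmono hi₀i₁),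
         lt_of_le_of_lt (hNmono.monotone hi₁k) hkIoo.2⟩
      set w := (N i₀ + N i₁) / 2 with hwdef
      have hNlt : N i₀ < N i₁ := hNmono hi₀i₁
      have hw1 : N i₀ < w := by rw [hwdef]; linarith
      have hw2 : w < N i₁ := by rw [hwdef]; linarith
      have hwx : x < w := lt_trans hi₀mem.1 hw1
      have hwy : w < y := lt_trans hw2 hNi₁.2
      have hwT : w ∈ Set.Ico 0 T := ⟨le_trans hx.1 hwx.le, lt_trans hwy hy.2⟩
      have hwN : ∀ k', N k' ≠ w := by
        intro k' hk'
        rcases Nat.lt_or_ge (k' : ℕ) ((i₀ : ℕ) + 1) with h | h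
        · have : k' ≤ i₀ := by rw [Fin.le_def]; omega
          have := hNmono.monotone this
          rw [hk'] at this
          exact absurd this (not_le.mpr hw1)
        · have : i₁ ≤ k' := by rw [Fin.le_def]; simpa [hi₁def] using h
          have := hNmono.monotone this
          rw [hk'] at this
          exact absurd this (not_le.mpr hw2)
      -- the filters
      have hfilter1 : Finset.univ.filter (fun i => N i ∈ Set.Ioo x w) = {i₀} := by
        ext k'
        simp only [Finset.mem_filter, Finset.mem_univ, true_and, Finset.mem_singleton]
        constructor
        · intro hk'
          have hk'f : N k' ∈ Set.Ioo x y := ⟨hk'.1, lt_trans hk'.2 hwy⟩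
          have h1 := hi₀min k' hk'f
          have h2 : k' < i₁ := by
            by_contra hcon
            push_neg at hcon
            exact absurd (hNmono.monotone hcon) (not_le.mpr (lt_trans hk'.2 hw2))
          rw [Fin.lt_def] at h2
          rw [Fin.le_def] at h1
          apply Fin.ext
          simp only [hi₁def] at h2
          omega
        · intro hk'
          rw [hk']
          exact ⟨hi₀mem.1, hw1⟩
      have hfilter2 : Finset.univ.filter (fun i => N i ∈ Set.Ioo w y) =
          (Finset.univ.filter (fun i => N i ∈ Set.Ioo x y)).erase i₀ := by
        ext k'
        simp only [Finset.mem_filter, Finset.mem_univ, true_and, Finset.mem_erase]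
        constructor
        · intro hk'
          refine ⟨?_, lt_trans hwx hk'.1, hk'.2⟩
          intro hcon
          rw [hcon] at hk'
          exact absurd hk'.1 (not_lt.mpr hw1.le)
        · intro ⟨hne', hk'⟩
          refine ⟨?_, hk'.2⟩
          have h1 : i₀ < k' := lt_of_le_of_ne (hi₀min k' hk') (fun h => hne' h.symm)
          have h2 : i₁ ≤ k' := by
            rw [Fin.le_def]
            rw [Fin.lt_def] at h1
            simpa [hi₁def] using h1
          exact lt_of_lt_of_le hw2 (hNmono.monotone h2)
      have hcard1 : (Finset.univ.filter (fun i => N i ∈ Set.Ioo x w)).card = 1 := by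
        rw [hfilter1]; simp
      have hcard2 : (Finset.univ.filter (fun i => N i ∈ Set.Ioo w y)).card = C - 1 := by
        rw [hfilter2, Finset.card_erase_of_mem, hcard]
        simp only [Finset.mem_filter, Finset.mem_univ, true_and]
        exact hi₀mem
      have hA := ih 1 hC2 x w hx hwT hwx.le hxN hwN hcard1
      have hB := ih (C - 1) (by omega) w y hwT hy hwy.le hwN hyN hcard2
      have hwne : psi p F N w ≠ 0 := psi_ne_zero hcheb hNmono.injective hNmem hwT hwN
      rw [pow_one] at hA
      have hCe : C - 1 + 1 = C := by omega
      rw [← hCe, pow_succ]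
      have h4 := mul_pos hA hB
      have h5 : psi p F N x * psi p F N w * -1 * (psi p F N w * psi p F N y * (-1) ^ (C - 1))
          = psi p F N x * psi p F N y * ((-1 : ℝ) ^ (C - 1) * -1) * (psi p F N w * psi p F N w) := by
        ring
      rw [h5] at h4
      rcases mul_pos_iff.mp h4 with ⟨h6, _⟩ | ⟨_, h7⟩
      · exact h6
      · exact absurd h7 (not_lt.mpr (mul_self_nonneg _))


lemma integral_pos_of_nonneg {G : ℝ → ℝ} (hG : Continuous G) {a b y : ℝ} (hab : a < b)
    (hy : y ∈ Set.Icc a b) (hnn : ∀ x ∈ Set.Icc a b, 0 ≤ G x) (hpos : 0 < G y) :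
    0 < ∫ x in a..b, G x := by
  have hU : IsOpen (G ⁻¹' Set.Ioi (G y / 2)) := (isOpen_Ioi).preimage hG
  obtain ⟨r, hr, hball⟩ := Metric.isOpen_iff.mp hU y (by simp; linarith)
  set a' := max a (y - r / 2) with ha'
  set b' := min b (y + r / 2) with hb'
  have haa' : a ≤ a' := le_max_left _ _
  have hb'b : b' ≤ b := min_le_left _ _
  have ha'y : a' ≤ y := max_le hy.1 (by linarith)
  have hyb' : y ≤ b' := le_min hy.2 (by linarith)
  have ha'b' : a' < b' := by
    rcases lt_or_eq_of_le hy.2 with h | h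
    · have : y < b' := lt_min h (by linarith)
      linarith
    · have hay : a < y := h ▸ hab
      have : a' < y := max_lt hay (by linarith)
      have hb'y : b' = y := by rw [hb', ← h]; exact min_eq_left (by linarith [hr, h])
      rw [hb'y]; exact this
  have hmid : ∀ x ∈ Set.Icc a' b', G y / 2 ≤ G x := by
    intro x hx
    have : x ∈ Metric.ball y r := by
      rw [Metric.mem_ball, Real.dist_eq, abs_lt]
      constructor
      · have := hx.1; rw [ha'] at this
        have := le_trans (le_max_right a (y - r / 2)) this
        linarith
      · have := hx.2; rw [hb'] at this
        have := le_trans this (min_le_right b (y + r / 2))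
        linarith
    exact (hball this).le
  have hint1 : 0 ≤ ∫ x in a..a', G x :=
    intervalIntegral.integral_nonneg haa' fun u hu =>
      hnn u ⟨hu.1, le_trans hu.2 (le_trans ha'y hy.2)⟩
  have hint3 : 0 ≤ ∫ x in b'..b, G x :=
    intervalIntegral.integral_nonneg hb'b fun u hu =>
      hnn u ⟨le_trans (le_trans hy.1 hyb') hu.1, hu.2⟩
  have hint2 : (b' - a') * (G y / 2) ≤ ∫ x in a'..b', G x := by
    have := intervalIntegral.integral_mono_on (f := fun _ => G y / 2) (g := G) ha'b'.le
      (intervalIntegrable_const (μ := MeasureTheory.volume)) (hG.intervalIntegrable a' b') hmid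
    rwa [intervalIntegral.integral_const, smul_eq_mul] at this
  have hsplit : ∫ x in a..b, G x =
      (∫ x in a..a', G x) + (∫ x in a'..b', G x) + (∫ x in b'..b, G x) := by
    rw [intervalIntegral.integral_add_adjacent_intervals (hG.intervalIntegrable a a')
      (hG.intervalIntegrable a' b'),
      intervalIntegral.integral_add_adjacent_intervals (hG.intervalIntegrable a b')
      (hG.intervalIntegrable b' b)]
  rw [hsplit]
  have : 0 < (b' - a') * (G y / 2) := by
    apply mul_pos (by linarith) (by linarith)
  linarith

set_option maxHeartbeats 1600000 in
/-- If a continuous `2π`-periodic function `f` is orthogonal, with a nonnegative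
continuous `2π`-periodic weight `ρ` (with `f·ρ` not identically zero), to a Chebyshev
system of odd order `n` on the circle, then `f` changes sign at least `n+1` times
per period. -/
theorem orthogonal_to_chebyshev_sign_changes_circle
    (n : ℕ) (hodd : Odd n) (F : Fin n → ℝ → ℝ)
    (hFc : ∀ j, Continuous (F j))
    (hFper : ∀ j, Function.Periodic (F j) (2 * Real.pi))
    (hcheb : ∀ c : Fin n → ℝ, c ≠ 0 →
      {x ∈ Set.Ico 0 (2 * Real.pi) | ∑ j, c j * F j x = 0}.encard ≤ (n - 1 : ℕ))
    (ρ : ℝ → ℝ) (hρc : Continuous ρ) (hρper : Function.Periodic ρ (2 * Real.pi))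
    (hρ0 : ∀ x, 0 ≤ ρ x)
    (f : ℝ → ℝ) (hfc : Continuous f) (hfper : Function.Periodic f (2 * Real.pi))
    (hne : ∃ x, f x * ρ x ≠ 0)
    (horth : ∀ j, ∫ x in (0:ℝ)..(2 * Real.pi), f x * F j x * ρ x = 0) :
    ∃ t : Fin (n + 1) → ℝ, StrictMono t ∧ (∀ i, t i ∈ Set.Ico 0 (2 * Real.pi)) ∧
      (∀ i : Fin n, f (t i.castSucc) * f (t i.succ) < 0) ∧
      f (t (Fin.last n)) * f (t 0) < 0 := by
  classical
  by_contra hC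
  have hπ : 0 < 2 * Real.pi := by positivity
  obtain ⟨p, rfl⟩ : ∃ p, n = p + 1 := by
    rcases hodd with ⟨k, hk⟩
    exact ⟨2 * k, by omega⟩
  have hcheb' : ∀ c : Fin (p + 1) → ℝ, c ≠ 0 →
      {x ∈ Set.Ico 0 (2 * Real.pi) | ∑ j, c j * F j x = 0}.encard ≤ (p : ℕ∞) := by
    simpa using hcheb
  -- Step 1: no alternating chain of length `n = p + 1`
  have hAltn : ¬ AltChain f (2 * Real.pi) (p + 1) := by
    rintro ⟨t, h1, h2, h3⟩
    apply hC
    refine ⟨fun i => t i.val, ?_, ?_, ?_, ?_⟩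
    · rw [Fin.strictMono_iff_lt_succ]
      intro i
      simpa using h1 i.val i.isLt
    · intro i
      exact h2 i.val (by omega)
    · intro i
      simpa using h3 i.val i.isLt
    · have hs := altChain_sign (by omega) h3 (p + 1) le_rfl
      rw [Odd.neg_one_pow hodd] at hs
      have hlast : (Fin.last (p + 1)).val = p + 1 := rfl
      simp only [hlast]
      show f (t (p + 1)) * f (t 0) < 0
      nlinarith [hs]
  -- Step 2: the maximal alternating chain
  set m := Nat.findGreatest (AltChain f (2 * Real.pi)) (p + 1) with hmdef
  have hAltm : AltChain f (2 * Real.pi) m :=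
    Nat.findGreatest_spec (Nat.zero_le _) (altChain_zero hπ)
  have hm_le : m ≤ p + 1 := Nat.findGreatest_le _
  have hm_ne : m ≠ p + 1 := fun h => hAltn (h ▸ hAltm)
  have hm_lep : m ≤ p := by omega
  have hmax : ¬ AltChain f (2 * Real.pi) (m + 1) := by
    intro h
    have h1 : m + 1 ≤ Nat.findGreatest (AltChain f (2 * Real.pi)) (p + 1) :=
      Nat.le_findGreatest (by omega) h
    rw [← hmdef] at h1
    omega
  -- Step 3: the sign pattern of f
  obtain ⟨z, ε, hε, zmono, zIoo, hz0, hpat⟩ := pattern hfc hπ hAltm hmax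
  -- Step 4: largest separator
  set ζ : ℝ := if 0 < m then z (m - 1) else 0 with hζdef
  have hζ0 : 0 ≤ ζ := by
    rw [hζdef]; split_ifs with h
    · exact (zIoo (m - 1) (by omega)).1.le
    · exact le_refl 0
  have hζT : ζ < 2 * Real.pi := by
    rw [hζdef]; split_ifs with h
    · exact (zIoo (m - 1) (by omega)).2
    · exact hπ
  have hzζ : ∀ i, i < m → z i ≤ ζ := by
    intro i him
    rw [hζdef, if_pos (by omega : 0 < m)]
    rcases Nat.lt_or_ge i (m - 1) with h | h
    · exact (zmono i (m - 1) h (by omega)).le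
    · have : i = m - 1 := by omega
      rw [this]
  -- Step 5: for every k, a unit coefficient vector with the key positivity property
  have hstep : ∀ k : ℕ, ∃ d : Fin (p + 1) → ℝ, ‖d‖ = 1 ∧
      ∀ x ∈ Set.Ico 0 (2 * Real.pi), x < 2 * Real.pi - (p : ℝ) / (k + 1) →
        0 ≤ f x * ∑ j, d j * F j x := by
    intro k
    set q := p - m with hqdef
    have hqcast : (q : ℝ) = (p : ℝ) - (m : ℝ) := by
      rw [hqdef]; push_cast [Nat.cast_sub hm_lep]; ring
    set δ : ℝ := min ((2 * Real.pi - ζ) / (q + 1)) (1 / (k + 1)) with hδdef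
    have hδpos : 0 < δ :=
      lt_min (div_pos (by linarith) (by positivity)) (by positivity)
    have hδle : δ * ((q : ℝ) + 1) ≤ 2 * Real.pi - ζ := by
      have h1 : δ ≤ (2 * Real.pi - ζ) / ((q : ℝ) + 1) := min_le_left _ _
      exact (le_div_iff₀ (by positivity)).mp h1
    have hqδ : (q : ℝ) * δ < 2 * Real.pi - ζ := by nlinarith [hδpos]
    have hδk : δ ≤ 1 / ((k : ℝ) + 1) := min_le_right _ _
    set W : ℝ := 2 * Real.pi - q * δ with hWdef
    have hWζ : ζ < W := by rw [hWdef]; linarith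
    have hWle : W ≤ 2 * Real.pi := by
      rw [hWdef]
      nlinarith [mul_nonneg (Nat.cast_nonneg (α := ℝ) q) hδpos.le]
    set N : Fin p → ℝ := fun i =>
      if (i : ℕ) < m then z i else 2 * Real.pi - ((p : ℝ) - (i : ℕ)) * δ with hNdef
    have hNz : ∀ i : Fin p, (i : ℕ) < m → N i = z i := by
      intro i hi
      rw [hNdef]
      simp only [if_pos hi]
    have hNextra : ∀ i : Fin p, m ≤ (i : ℕ) → W ≤ N i ∧ N i < 2 * Real.pi := by
      intro i hi
      rw [hNdef]
      simp only [if_neg (by omega : ¬ (i : ℕ) < m)]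
      constructor
      · rw [hWdef]
        have h1 : ((p : ℝ) - (i : ℕ)) ≤ (q : ℝ) := by
          rw [hqcast]
          have : (m : ℝ) ≤ ((i : ℕ) : ℝ) := by exact_mod_cast hi
          linarith
        nlinarith [hδpos.le, mul_le_mul_of_nonneg_right h1 hδpos.le]
      · have hip : ((i : ℕ) : ℝ) < (p : ℝ) := by exact_mod_cast i.isLt
        nlinarith [hδpos]
    have hNmono : StrictMono N := by
      intro i j hij
      have hij' : (i : ℕ) < (j : ℕ) := hij
      by_cases hjm : (j : ℕ) < m
      · rw [hNz i (by omega), hNz j hjm]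
        exact zmono i j hij' hjm
      · by_cases him : (i : ℕ) < m
        · rw [hNz i him]
          have h1 : z i ≤ ζ := hzζ i him
          have h2 := (hNextra j (by omega)).1
          linarith
        · rw [hNdef]
          simp only [if_neg him, if_neg hjm]
          have : ((i : ℕ) : ℝ) < ((j : ℕ) : ℝ) := by exact_mod_cast hij'
          nlinarith [hδpos]
    have hNmem : ∀ i, N i ∈ Set.Ico 0 (2 * Real.pi) := by
      intro i
      by_cases him : (i : ℕ) < m
      · rw [hNz i him]
        exact ⟨(zIoo i him).1.le, (zIoo i him).2⟩
      · have h := hNextra i (by omega)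
        exact ⟨by linarith, h.2⟩
    set x₀ : ℝ := (if 0 < m then min (z 0) W else W) / 2 with hx₀def
    have hWpos : 0 < W := by linarith
    have hx₀pos : 0 < x₀ := by
      rw [hx₀def]; split_ifs with h
      · have := lt_min (zIoo 0 h).1 hWpos
        linarith
      · linarith
    have hx₀W : x₀ < W := by
      rw [hx₀def]; split_ifs with h
      · have := min_le_right (z 0) W
        linarith
      · linarith
    have hx₀z : ∀ i, i < m → x₀ < z i := by
      intro i him
      have h0 : 0 < m := by omega
      have h1 : x₀ ≤ z 0 / 2 := by
        rw [hx₀def, if_pos h0]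
        have := min_le_left (z 0) W
        linarith
      have hz0pos := (zIoo 0 h0).1
      rcases Nat.eq_zero_or_pos i with rfl | hi
      · linarith
      · have := zmono 0 i (by omega) him
        linarith
    have hx₀mem : x₀ ∈ Set.Ico 0 (2 * Real.pi) := ⟨hx₀pos.le, by linarith⟩
    have hx₀N : ∀ i, N i ≠ x₀ := by
      intro i
      by_cases him : (i : ℕ) < m
      · rw [hNz i him]
        exact ne_of_gt (hx₀z i him)
      · exact ne_of_gt (lt_of_lt_of_le hx₀W (hNextra i (by omega)).1)
    have hψ0 : psi p F N x₀ ≠ 0 := psi_ne_zero hcheb' hNmono.injective hNmem hx₀mem hx₀N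
    set s : ℝ := if 0 < psi p F N x₀ * ε then 1 else -1 with hsdef
    have hs : 0 < s * (psi p F N x₀ * ε) := by
      rw [hsdef]; split_ifs with h
      · rw [one_mul]; exact h
      · push_neg at h
        have hne0 : psi p F N x₀ * ε ≠ 0 := mul_ne_zero hψ0 hε
        have : psi p F N x₀ * ε < 0 := lt_of_le_of_ne h hne0
        nlinarith
    set c : Fin (p + 1) → ℝ := coef p F N with hcdef
    have hsum : ∀ x, psi p F N x = ∑ j, c j * F j x := fun x => psi_eq_sum p F N x
    have hcne : c ≠ 0 := by
      intro h0
      apply hψ0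
      rw [hsum x₀, h0]
      simp
    have hcnorm : 0 < ‖c‖ := norm_pos_iff.mpr hcne
    refine ⟨(s / ‖c‖) • c, ?_, ?_⟩
    · rw [norm_smul, norm_div]
      have hsabs : ‖s‖ = 1 := by rw [hsdef]; split_ifs <;> simp
      rw [hsabs, norm_norm]
      field_simp
    · intro x hx hxW'
      have hxW : x < W := by
        rw [hWdef]
        have h1 : (q : ℝ) * δ ≤ (q : ℝ) * (1 / (k + 1)) :=
          mul_le_mul_of_nonneg_left hδk (Nat.cast_nonneg q)
        have h2 : (q : ℝ) ≤ (p : ℝ) := by exact_mod_cast (by omega : q ≤ p)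
        have h3 : (q : ℝ) * (1 / ((k : ℝ) + 1)) ≤ (p : ℝ) * (1 / ((k : ℝ) + 1)) :=
          mul_le_mul_of_nonneg_right h2 (by positivity)
        have h4 : (p : ℝ) * (1 / ((k : ℝ) + 1)) = (p : ℝ) / ((k : ℝ) + 1) := by ring
        linarith
      have hsum2 : ∑ j, ((s / ‖c‖) • c) j * F j x = (s / ‖c‖) * psi p F N x := by
        rw [hsum x, Finset.mul_sum]
        exact Finset.sum_congr rfl fun j _ => by
          simp only [Pi.smul_apply, smul_eq_mul]
          ring
      rw [hsum2]
      have key : 0 ≤ f x * (s * psi p F N x) := by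
        by_cases hfx : f x = 0
        · rw [hfx]; simp
        · have hxz : ∀ i, i < m → z i ≠ x := fun i him h => hfx (h ▸ hz0 i him)
          have hxN : ∀ i : Fin p, N i ≠ x := by
            intro i
            by_cases him : (i : ℕ) < m
            · rw [hNz i him]
              exact hxz i him
            · exact ne_of_gt (lt_of_lt_of_le hxW (hNextra i (by omega)).1)
          have hchain : 0 < psi p F N x₀ * psi p F N x * (-1) ^ (zcnt z m x) := by
            rcases le_total x x₀ with hxx₀ | hx₀x
            · have hC0 : zcnt z m x = 0 := by
                rw [zcnt, Finset.card_eq_zero, Finset.filter_eq_empty_iff]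
                intro i hi
                rw [Finset.mem_range] at hi
                exact not_le.mpr (lt_of_le_of_lt hxx₀ (hx₀z i hi))
              have hcard : (Finset.univ.filter (fun i => N i ∈ Set.Ioo x x₀)).card = 0 := by
                rw [Finset.card_eq_zero, Finset.filter_eq_empty_iff]
                intro i _
                simp only [Set.mem_Ioo, not_and]
                intro _
                by_cases him : (i : ℕ) < m
                · rw [hNz i him]
                  exact not_lt.mpr (hx₀z i him).le
                · exact not_lt.mpr (le_trans hx₀W.le (hNextra i (by omega)).1)
              have h := psi_chain hcheb' hFc hNmono hNmem 0 x x₀ hx hx₀mem hxx₀ hxN hx₀N hcard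
              rw [hC0]
              rw [pow_zero] at h ⊢
              nlinarith [h]
            · have hcard : (Finset.univ.filter (fun i => N i ∈ Set.Ioo x₀ x)).card
                  = zcnt z m x := by
                rw [zcnt]
                refine Finset.card_bij (fun i _ => (i : ℕ)) ?_ ?_ ?_
                · intro i hi
                  simp only [Finset.mem_filter, Finset.mem_univ, true_and,
                    Set.mem_Ioo] at hi
                  have him : (i : ℕ) < m := by
                    by_contra hcon
                    have := (hNextra i (by omega)).1
                    linarith [hi.2]
                  rw [Finset.mem_filter, Finset.mem_range]
                  refine ⟨him, ?_⟩
                  rw [hNz i him] at hi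
                  exact hi.2.le
                · intro i _ j _ hij
                  exact Fin.ext hij
                · intro j hj
                  rw [Finset.mem_filter, Finset.mem_range] at hj
                  refine ⟨⟨j, by omega⟩, ?_, rfl⟩
                  simp only [Finset.mem_filter, Finset.mem_univ, true_and, Set.mem_Ioo]
                  rw [hNz ⟨j, by omega⟩ hj.1]
                  exact ⟨hx₀z j hj.1, lt_of_le_of_ne hj.2 (hxz j hj.1)⟩
              exact psi_chain hcheb' hFc hNmono hNmem (zcnt z m x) x₀ x hx₀mem hx hx₀x
                hx₀N hxN hcard
          have hpatx : 0 < f x * ε * (-1) ^ (zcnt z m x) := by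
            have h1 := hpat x hx
            have h2 : f x * ε * (-1 : ℝ) ^ (zcnt z m x) ≠ 0 :=
              mul_ne_zero (mul_ne_zero hfx hε) (pow_ne_zero _ (by norm_num))
            exact lt_of_le_of_ne h1 (Ne.symm h2)
          have hPP : (-1 : ℝ) ^ (zcnt z m x) * (-1) ^ (zcnt z m x) = 1 := by
            rw [← mul_pow]; norm_num
          have h4 := mul_pos (mul_pos hpatx hchain) hs
          have h5 : f x * ε * (-1) ^ (zcnt z m x) *
              (psi p F N x₀ * psi p F N x * (-1) ^ (zcnt z m x)) *
              (s * (psi p F N x₀ * ε)) =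
              f x * (s * psi p F N x) *
              (ε * ε * (psi p F N x₀ * psi p F N x₀) *
                ((-1 : ℝ) ^ (zcnt z m x) * (-1) ^ (zcnt z m x))) := by ring
          rw [h5, hPP, mul_one] at h4
          rcases mul_pos_iff.mp h4 with ⟨h6, _⟩ | ⟨_, h7⟩
          · exact h6.le
          · exfalso
            nlinarith [mul_self_nonneg ε, mul_self_nonneg (psi p F N x₀)]
      have heq : f x * (s / ‖c‖ * psi p F N x) = f x * (s * psi p F N x) / ‖c‖ := by
        ring
      rw [heq]
      exact div_nonneg key hcnorm.le
  -- Step 6: pass to the limit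
  choose d hd1 hd2 using hstep
  obtain ⟨dl, hdlmem, φ, hφ, hφtend⟩ :=
    (isCompact_sphere (0 : Fin (p + 1) → ℝ) 1).tendsto_subseq
      (fun k => by simpa [mem_sphere_iff_norm] using hd1 k)
  have hdl1 : ‖dl‖ = 1 := by simpa [mem_sphere_iff_norm] using hdlmem
  have hdl0 : dl ≠ 0 := by
    intro h
    rw [h] at hdl1
    simp at hdl1
  have hB : ∀ x ∈ Set.Ico 0 (2 * Real.pi), 0 ≤ f x * ∑ j, dl j * F j x := by
    intro x hx
    have htend : Filter.Tendsto (fun k => f x * ∑ j, d (φ k) j * F j x)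
        Filter.atTop (nhds (f x * ∑ j, dl j * F j x)) := by
      apply Filter.Tendsto.const_mul
      apply tendsto_finset_sum
      intro j _
      exact ((tendsto_pi_nhds.mp hφtend j).mul_const _)
    apply ge_of_tendsto htend
    obtain ⟨K, hK⟩ := exists_nat_gt ((p : ℝ) / (2 * Real.pi - x))
    rw [Filter.eventually_atTop]
    refine ⟨K, fun k hk => ?_⟩
    apply hd2 (φ k) x hx
    have h2πx : 0 < 2 * Real.pi - x := by linarith [hx.2]
    have hφk : (K : ℝ) ≤ (φ k : ℝ) := by
      have h1 : K ≤ k := hk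
      have h2 : k ≤ φ k := hφ.le_apply
      exact_mod_cast le_trans h1 h2
    have hKpos : (p : ℝ) / (2 * Real.pi - x) < K := hK
    have h6 : (p : ℝ) / ((φ k : ℝ) + 1) ≤ (p : ℝ) / ((K : ℝ) + 1) := by
      apply div_le_div_of_nonneg_left (Nat.cast_nonneg p) (by positivity) (by linarith)
    have h7 : (p : ℝ) / ((K : ℝ) + 1) < 2 * Real.pi - x := by
      rw [div_lt_iff₀ (by positivity)]
      have h8 : (p : ℝ) < K * (2 * Real.pi - x) := by
        rw [div_lt_iff₀ h2πx] at hKpos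
        exact hKpos
      nlinarith [h2πx]
    linarith
  -- Step 7: the combination vanishes identically where f·ρ ≠ 0
  have hGcont : Continuous (fun x => f x * (∑ j, dl j * F j x) * ρ x) :=
    (hfc.mul (continuous_finset_sum _ fun j _ => continuous_const.mul (hFc j))).mul hρc
  have hGnn : ∀ x ∈ Set.Icc 0 (2 * Real.pi), 0 ≤ f x * (∑ j, dl j * F j x) * ρ x := by
    intro x hx
    rcases lt_or_eq_of_le hx.2 with h | h
    · exact mul_nonneg (hB x ⟨hx.1, h⟩) (hρ0 x)
    · have hf2π : f x = f 0 := by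
        rw [h]
        have := hfper 0
        rw [zero_add] at this
        exact this
      have hF2π : ∀ j, F j x = F j 0 := by
        intro j
        rw [h]
        have := hFper j 0
        rw [zero_add] at this
        exact this
      have hρ2π : ρ x = ρ 0 := by
        rw [h]
        have := hρper 0
        rw [zero_add] at this
        exact this
      rw [hf2π, hρ2π]
      simp_rw [hF2π]
      exact mul_nonneg (hB 0 ⟨le_refl 0, hπ⟩) (hρ0 0)
  have hGint : ∫ x in (0:ℝ)..(2 * Real.pi), f x * (∑ j, dl j * F j x) * ρ x = 0 := by
    have hrw : ∀ x : ℝ, f x * (∑ j, dl j * F j x) * ρ x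
        = ∑ j, dl j * (f x * F j x * ρ x) := by
      intro x
      rw [Finset.mul_sum, Finset.sum_mul]
      exact Finset.sum_congr rfl fun j _ => by ring
    simp_rw [hrw]
    rw [intervalIntegral.integral_finset_sum (f := fun j x => dl j * (f x * F j x * ρ x)) (fun j _ =>
      ((continuous_const.mul ((hfc.mul (hFc j)).mul hρc)).intervalIntegrable _ _))]
    have : ∀ j ∈ Finset.univ, ∫ x in (0:ℝ)..(2 * Real.pi), dl j * (f x * F j x * ρ x)
        = 0 := by
      intro j _
      rw [intervalIntegral.integral_const_mul, horth j, mul_zero]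
    rw [Finset.sum_congr rfl this]
    simp
  have hG0 : ∀ y ∈ Set.Icc 0 (2 * Real.pi), f y * (∑ j, dl j * F j y) * ρ y = 0 := by
    by_contra hcon
    push_neg at hcon
    obtain ⟨y, hy, hyne⟩ := hcon
    have hypos : 0 < f y * (∑ j, dl j * F j y) * ρ y :=
      lt_of_le_of_ne (hGnn y hy) (Ne.symm hyne)
    have := integral_pos_of_nonneg hGcont hπ hy hGnn hypos
    rw [hGint] at this
    exact lt_irrefl 0 this
  -- Step 8: contradiction with the Chebyshev property
  obtain ⟨x₁, hx₁⟩ := hne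
  have hper : Function.Periodic (fun x => f x * ρ x) (2 * Real.pi) := hfper.mul hρper
  obtain ⟨y, hyI, hyv⟩ := hper.exists_mem_Ico₀ hπ x₁
  have hyne : f y * ρ y ≠ 0 := by
    rw [← hyv]
    exact hx₁
  have hUopen : IsOpen {u : ℝ | f u * ρ u ≠ 0} :=
    isOpen_compl_singleton.preimage (hfc.mul hρc)
  obtain ⟨r, hr, hball⟩ := Metric.isOpen_iff.mp hUopen y hyne
  set b₁ : ℝ := min (y + r / 2) ((y + 2 * Real.pi) / 2) with hb₁def
  have hyb₁ : y < b₁ := lt_min (by linarith) (by linarith [hyI.2])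
  have hb₁T : b₁ < 2 * Real.pi := by
    have := min_le_right (y + r / 2) ((y + 2 * Real.pi) / 2)
    have := hyI.2
    rw [hb₁def]
    have h2 := min_le_right (y + r / 2) ((y + 2 * Real.pi) / 2)
    linarith
  have hIccsub : Set.Icc y b₁ ⊆ Set.Ico 0 (2 * Real.pi) := by
    intro u hu
    exact ⟨le_trans hyI.1 hu.1, lt_of_le_of_lt hu.2 hb₁T⟩
  have hIccball : Set.Icc y b₁ ⊆ Metric.ball y r := by
    intro u hu
    rw [Metric.mem_ball, Real.dist_eq, abs_lt]
    have h1 := min_le_left (y + r / 2) ((y + 2 * Real.pi) / 2)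
    rw [hb₁def] at hu
    constructor
    · linarith [hu.1]
    · have := hu.2
      have h3 : u ≤ y + r / 2 := le_trans this h1
      linarith
  have hzero : ∀ u ∈ Set.Icc y b₁, ∑ j, dl j * F j u = 0 := by
    intro u hu
    have h1 := hG0 u ⟨(hIccsub hu).1, (hIccsub hu).2.le⟩
    have h2 : f u * ρ u ≠ 0 := hball (hIccball hu)
    by_contra hS
    apply h2
    have h3 : f u * (∑ j, dl j * F j u) * ρ u = (f u * ρ u) * (∑ j, dl j * F j u) := by
      ring
    rw [h3] at h1
    rcases mul_eq_zero.mp h1 with h | h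
    · exact h
    · exact absurd h hS
  have hsub : Set.Icc y b₁ ⊆ {x ∈ Set.Ico 0 (2 * Real.pi) | ∑ j, dl j * F j x = 0} := by
    intro u hu
    exact ⟨hIccsub hu, hzero u hu⟩
  have hinf : (Set.Icc y b₁).encard = ⊤ := (Set.Icc_infinite hyb₁).encard_eq
  have hfinal := le_trans (hinf ▸ Set.encard_le_encard hsub) (hcheb' dl hdl0)
  rw [top_le_iff] at hfinal
  exact ENat.coe_ne_top p hfinal
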